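/- Effect-preserving cases: for all words u, v, z over the alphabet {⟨, ⟩}: (i) if r(uv) > ℓ(z), then: if ℓ(u⟩v) = ℓ(uv) + 1 and r(u⟩v) = r(uv) then ℓ((u⟩v)·z) = ℓ((uv)·z) + 1 and r((u⟩v)·z) = r((uv)·z), and if ℓ(u⟩v) = ℓ(uv) and r(u⟩v) = r(uv) − 1 then ℓ((u⟩v)·z) = ℓ((uv)·z) and r((u⟩v)·z) = r((uv)·z) − 1; (ii) symmetrically, if r(z) ≤ ℓ(uv) then the effect of the insertion on z·(u⟩v) relative to z·(uv) equals its effect on u⟩v relative to uv. -/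

import Mathlib

/-- The alphabet `Σ_k` of `k` types of opening (`op`) and closing (`cl`) parentheses. -/
inductive Par (k : ℕ) where
  | op : Fin k → Par k
  | cl : Fin k → Par k
deriving DecidableEq

namespace Par

/-- One step of the type-unaware reduction: `μ_u(zσ)` computed from `μ_u(z)`. -/
def muUStep {k : ℕ} (z : List (Par k)) (σ : Par k) : List (Par k) :=
  match z.getLast?, σ with
  | some (op _), cl _ => z.dropLast
  | _, _ => z ++ [σ]

/-- The type-unaware reduction `μ_u`. -/
def muU {k : ℕ} (w : List (Par k)) : List (Par k) := w.foldl muUStep []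

/-- One step of the type-aware reduction: cancellation requires matching types. -/
def muAStep {k : ℕ} (z : List (Par k)) (σ : Par k) : List (Par k) :=
  match z.getLast?, σ with
  | some (op i), cl j => if i = j then z.dropLast else z ++ [σ]
  | _, _ => z ++ [σ]

/-- The type-aware reduction `μ_a`. -/
def muA {k : ℕ} (w : List (Par k)) : List (Par k) := w.foldl muAStep []

/-- Is the symbol a closing parenthesis? -/
def isCl {k : ℕ} : Par k → Bool
  | cl _ => true
  | _ => false

/-- Is the symbol an opening parenthesis? -/
def isOp {k : ℕ} : Par k → Bool
  | op _ => true
  | _ => false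

/-- `ℓ(w)`: the number of unmatched closing parentheses of `w`. -/
def ell {k : ℕ} (w : List (Par k)) : ℕ := (muU w).countP isCl

/-- `r(w)`: the number of unmatched opening parentheses of `w`. -/
def rr {k : ℕ} (w : List (Par k)) : ℕ := (muU w).countP isOp

/-- The Dyck language `D_k`: smallest set containing `ε`, closed under
concatenation, and containing `⟨_i w ⟩_i` whenever it contains `w`. -/
inductive Dyck {k : ℕ} : List (Par k) → Prop where
  | nil : Dyck []
  | append {u v : List (Par k)} : Dyck u → Dyck v → Dyck (u ++ v)
  | wrap {w : List (Par k)} (i : Fin k) : Dyck w → Dyck (op i :: w ++ [cl i])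

end Par

namespace Par

lemma muUStep_op (z : List (Par 1)) (i : Fin 1) : muUStep z (op i) = z ++ [op i] := by
  unfold muUStep
  split
  · rename_i h1 h2 heq1 heq2
    exact absurd heq2 (by simp)
  · rfl

lemma muUStep_cl_of_op (z : List (Par 1)) (i j : Fin 1) (h : z.getLast? = some (op i)) :
    muUStep z (cl j) = z.dropLast := by
  unfold muUStep
  split
  · rfl
  · rename_i hne
    exact absurd (hne i j h rfl) (by simp)

lemma muUStep_cl_of_not_op (z : List (Par 1)) (j : Fin 1)
    (h : ∀ i, z.getLast? ≠ some (op i)) : muUStep z (cl j) = z ++ [cl j] := by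
  unfold muUStep
  split
  · rename_i i _ heq1 _
    exact absurd heq1 (h i)
  · rfl

def canon (a b : ℕ) : List (Par 1) :=
  List.replicate a (cl 0) ++ List.replicate b (op 0)

def g (p : ℕ × ℕ) (σ : Par 1) : ℕ × ℕ :=
  match σ with
  | op _ => (p.1, p.2 + 1)
  | cl _ => if p.2 = 0 then (p.1 + 1, 0) else (p.1, p.2 - 1)

lemma par1_cases (σ : Par 1) : σ = op 0 ∨ σ = cl 0 := by
  rcases σ with i | i
  · left; rw [Fin.eq_zero i]
  · right; rw [Fin.eq_zero i]

lemma step_canon (a b : ℕ) (σ : Par 1) :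
    muUStep (canon a b) σ = canon (g (a, b) σ).1 (g (a, b) σ).2 := by
  rcases par1_cases σ with h | h <;> subst h
  · rw [muUStep_op]
    simp [canon, g, List.replicate_succ']
  · cases b with
    | zero =>
      rw [muUStep_cl_of_not_op]
      · simp [canon, g, List.replicate_succ']
      · intro i hi
        simp [canon] at hi
        rcases Nat.eq_zero_or_pos a with h0 | h0
        · simp [h0] at hi
        · rw [List.getLast?_eq_getLast (by simp; omega), List.getLast_replicate] at hi
          simp at hi
    | succ b' =>
      have hc : canon a (b' + 1) = canon a b' ++ [op 0] := by
        simp [canon, List.replicate_succ']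
      rw [muUStep_cl_of_op _ 0 0 (by rw [hc]; simp), hc, List.dropLast_concat]
      simp [g]

lemma foldl_canon (z : List (Par 1)) : ∀ a b : ℕ,
    z.foldl muUStep (canon a b) = canon (z.foldl g (a, b)).1 (z.foldl g (a, b)).2 := by
  induction z with
  | nil => intro a b; rfl
  | cons σ t ih =>
    intro a b
    simp only [List.foldl_cons, step_canon]
    rw [ih]

lemma muU_canon (w : List (Par 1)) :
    muU w = canon (w.foldl g (0, 0)).1 (w.foldl g (0, 0)).2 := by
  have : muU w = w.foldl muUStep (canon 0 0) := rfl
  rw [this, foldl_canon]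

lemma ell_eq (w : List (Par 1)) : ell w = (w.foldl g (0, 0)).1 := by
  rw [ell, muU_canon, canon]
  simp [List.countP_append, List.countP_replicate, isCl, isOp]

lemma rr_eq (w : List (Par 1)) : rr w = (w.foldl g (0, 0)).2 := by
  rw [rr, muU_canon, canon]
  simp [List.countP_append, List.countP_replicate, isCl, isOp]

lemma g_add (z : List (Par 1)) : ∀ a b : ℕ,
    z.foldl g (a, b) = (a + (z.foldl g (0, b)).1, (z.foldl g (0, b)).2) := by
  induction z with
  | nil => intro a b; simp
  | cons σ t ih =>
    intro a b
    simp only [List.foldl_cons]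
    rcases par1_cases σ with h | h <;> subst h
    · simp only [g]
      rw [ih a (b+1)]
    · simp only [g]
      by_cases h0 : b = 0
      · rw [if_pos h0, if_pos h0, ih (a+1) 0, ih 1 0]
        simp [Prod.ext_iff]
        omega
      · rw [if_neg h0, if_neg h0]
        exact ih a (b-1)

lemma g_shift (z : List (Par 1)) : ∀ b : ℕ,
    z.foldl g (0, b) = ((z.foldl g (0, 0)).1 - b,
      (z.foldl g (0, 0)).2 + (b - (z.foldl g (0, 0)).1)) := by
  induction z with
  | nil => intro b; simp
  | cons σ t ih =>
    intro b
    simp only [List.foldl_cons]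
    rcases par1_cases σ with h | h <;> subst h
    · simp only [g]
      rw [ih (b+1), ih 1]
      simp [Prod.ext_iff]
      omega
    · simp only [g]
      by_cases h0 : b = 0
      · rw [if_pos h0, if_true]
        subst h0
        simp
      · rw [if_neg h0, if_true, ih (b-1), g_add t 1 0]
        simp [Prod.ext_iff]
        omega

lemma ell_append (w z : List (Par 1)) :
    ell (w ++ z) = ell w + (ell z - rr w) := by
  have h : (w ++ z).foldl g (0, 0) = z.foldl g (w.foldl g (0, 0)) := List.foldl_append ..
  rw [ell_eq, ell_eq, ell_eq, rr_eq, h]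
  have h2 := g_add z (w.foldl g (0,0)).1 (w.foldl g (0,0)).2
  have h3 := g_shift z (w.foldl g (0,0)).2
  rw [show z.foldl g (w.foldl g (0,0)) = z.foldl g ((w.foldl g (0,0)).1, (w.foldl g (0,0)).2) from by simp, h2, h3]

lemma rr_append (w z : List (Par 1)) :
    rr (w ++ z) = rr z + (rr w - ell z) := by
  have h : (w ++ z).foldl g (0, 0) = z.foldl g (w.foldl g (0, 0)) := List.foldl_append ..
  rw [rr_eq, rr_eq, ell_eq, rr_eq, h]
  have h2 := g_add z (w.foldl g (0,0)).1 (w.foldl g (0,0)).2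
  have h3 := g_shift z (w.foldl g (0,0)).2
  rw [show z.foldl g (w.foldl g (0,0)) = z.foldl g ((w.foldl g (0,0)).1, (w.foldl g (0,0)).2) from by simp, h2, h3]

end Par

/-- effect-preserving cases. (i) if `r(uv) > ℓ(z)` then the effect of
inserting a closing parenthesis into the left part carries over unchanged to the
concatenation; (ii) if `r(z) ≤ ℓ(uv)` then the effect of the insertion on
`z·(u⟩v)` relative to `z·(uv)` equals its effect on `u⟩v` relative to `uv`. -/
theorem effect_preserving (u v z : List (Par 1)) :
    (Par.ell z < Par.rr (u ++ v) →
      ((Par.ell (u ++ Par.cl 0 :: v) = Par.ell (u ++ v) + 1 ∧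
        Par.rr (u ++ Par.cl 0 :: v) = Par.rr (u ++ v)) →
        Par.ell ((u ++ Par.cl 0 :: v) ++ z) = Par.ell ((u ++ v) ++ z) + 1 ∧
        Par.rr ((u ++ Par.cl 0 :: v) ++ z) = Par.rr ((u ++ v) ++ z)) ∧
      ((Par.ell (u ++ Par.cl 0 :: v) = Par.ell (u ++ v) ∧
        Par.rr (u ++ Par.cl 0 :: v) + 1 = Par.rr (u ++ v)) →
        Par.ell ((u ++ Par.cl 0 :: v) ++ z) = Par.ell ((u ++ v) ++ z) ∧
        Par.rr ((u ++ Par.cl 0 :: v) ++ z) + 1 = Par.rr ((u ++ v) ++ z))) ∧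
    (Par.rr z ≤ Par.ell (u ++ v) →
      (Par.ell (z ++ (u ++ Par.cl 0 :: v)) : ℤ) - (Par.ell (z ++ (u ++ v)) : ℤ) =
        (Par.ell (u ++ Par.cl 0 :: v) : ℤ) - (Par.ell (u ++ v) : ℤ) ∧
      (Par.rr (z ++ (u ++ Par.cl 0 :: v)) : ℤ) - (Par.rr (z ++ (u ++ v)) : ℤ) =
        (Par.rr (u ++ Par.cl 0 :: v) : ℤ) - (Par.rr (u ++ v) : ℤ)) := by
  
  have hw : u ++ Par.cl 0 :: v = (u ++ [Par.cl 0]) ++ v := by simp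
  rw [hw]
  have e1 : Par.ell ([Par.cl 0] : List (Par 1)) = 1 := rfl
  have e2 : Par.rr ([Par.cl 0] : List (Par 1)) = 0 := rfl
  simp only [Par.ell_append, Par.rr_append, e1, e2]
  omega
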